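/- Let μ, ν be probability measures on Cantor space with full support, and suppose A : 2^{<ℕ} → ℝ≥0 is increasing with A(∅) = 0 and A(σ0) = A(σ1) for all σ, and suppose the increments satisfy A(σι) − A(σ) < 2(1 − sqrt(1/2)) for all σ, ι. Then there exists a full-support probability measure μ on Cantor space such that for all strings σ and bits ι: A(σι) − A(σ) = 2(1 − Σ_{j∈{0,1}} sqrt(μ(σj|σ)·ν(σj|σ))). Consequently, for every ω, sup_n A(ω↾n) = Σ_n H²_{F_{n+1}}(μ,ν)(ω), where H²_{F_{n+1}}(μ,ν)(ω) = 2(1 − Σ_{j} sqrt(μ([ω↾n·j]|[ω↾n])·ν([ω↾n·j]|[ω↾n]))) is the squared Hellinger distance of the one-step conditional measures. -/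

import Mathlib

open MeasureTheory Filter Topology

/-- Cantor space `2^ℕ`. -/
abbrev Cantor : Type := ℕ → Bool

/-- The basic clopen cylinder determined by a finite binary string. -/
def cyl (σ : List Bool) : Set Cantor := {ω | ∀ i : Fin σ.length, ω i = σ.get i}

/-- The first `n` bits of `ω`, as a finite binary string. -/
def pre (ω : Cantor) (n : ℕ) : List Bool := (List.range n).map ω

/-- A measure on Cantor space has full support if every cylinder has positive measure. -/
def FullSupport (ν : Measure Cantor) : Prop := ∀ σ : List Bool, 0 < ν (cyl σ)

/-- Conditional probability `ν([τ] | [σ]) = ν([τ])/ν([σ])` (intended for `τ` extending `σ`). -/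
noncomputable def cp (ν : Measure Cantor) (τ σ : List Bool) : ℝ :=
  (ν (cyl τ)).toReal / (ν (cyl σ)).toReal

/-- The conditional measure `ν(· | [σ]) = ν(· ∩ [σ]) / ν([σ])`. -/
noncomputable def condMeas (ν : Measure Cantor) (σ : List Bool) : Measure Cantor :=
  (ν (cyl σ))⁻¹ • ν.restrict (cyl σ)

/-- The σ-algebra generated by the length-`k` cylinders. -/
def Falg (k : ℕ) : MeasurableSpace Cantor :=
  MeasurableSpace.generateFrom {A | ∃ σ : List Bool, σ.length = k ∧ A = cyl σ}

/-- Total variational distance between two measures restricted to a σ-algebra `G`. -/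
noncomputable def tv (G : MeasurableSpace Cantor) (ρ τ : @Measure Cantor MeasurableSpace.pi) : ℝ :=
  ⨆ A : {A : Set Cantor // MeasurableSet[G] A}, |(ρ A.1).toReal - (τ A.1).toReal|

/-- A dyadic `ν`-martingale: `M(σ) = M(σ0)ν(σ0|σ) + M(σ1)ν(σ1|σ)`. -/
def IsDyMart (ν : Measure Cantor) (M : List Bool → ℝ) : Prop :=
  ∀ σ : List Bool,
    M σ = M (σ ++ [false]) * cp ν (σ ++ [false]) σ + M (σ ++ [true]) * cp ν (σ ++ [true]) σ

/-- A dyadic `ν`-submartingale: `L(σ) ≤ L(σ0)ν(σ0|σ) + L(σ1)ν(σ1|σ)`. -/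
def IsDySubmart (ν : Measure Cantor) (L : List Bool → ℝ) : Prop :=
  ∀ σ : List Bool,
    L σ ≤ L (σ ++ [false]) * cp ν (σ ++ [false]) σ + L (σ ++ [true]) * cp ν (σ ++ [true]) σ

/-- A dyadic function is increasing if it is monotone along prefixes. -/
def IncrDy (A : List Bool → ℝ) : Prop := ∀ σ τ : List Bool, σ <+: τ → A σ ≤ A τ

lemma pre_length (ω : Cantor) (n : ℕ) : (pre ω n).length = n := by simp [pre]

lemma pre_succ (ω : Cantor) (n : ℕ) : pre ω (n+1) = pre ω n ++ [ω n] := by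
  simp [pre, List.range_succ]

lemma mem_cyl_iff (ω : Cantor) (σ : List Bool) : ω ∈ cyl σ ↔ pre ω σ.length = σ := by
  constructor
  · intro h
    apply List.ext_get (pre_length ω σ.length)
    intro i h1 h2
    have := h ⟨i, h2⟩
    rw [← this]; simp [pre]
  · intro h i
    have := (List.get_of_eq h.symm i)
    rw [this]
    simp [pre]

lemma mem_cyl_concat (ω : Cantor) (σ : List Bool) (b : Bool) :
    ω ∈ cyl (σ ++ [b]) ↔ ω ∈ cyl σ ∧ ω σ.length = b := by
  rw [mem_cyl_iff, mem_cyl_iff]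
  have : (σ ++ [b]).length = σ.length + 1 := by simp
  rw [this, pre_succ]
  constructor
  · intro h
    obtain ⟨h1, h2⟩ := List.concat_inj.mp (by simpa using h)
    exact ⟨h1, h2⟩
  · rintro ⟨h1, h2⟩; rw [h1, h2]

lemma measurableSet_cyl (σ : List Bool) : MeasurableSet (cyl σ) := by
  have : cyl σ = ⋂ i : Fin σ.length, (fun ω : Cantor => ω i) ⁻¹' {σ.get i} := by
    ext ω; simp [cyl]
  rw [this]
  exact MeasurableSet.iInter fun i => (measurable_pi_apply _) (measurableSet_singleton _)

lemma cyl_split (σ : List Bool) :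
    cyl (σ ++ [false]) ∪ cyl (σ ++ [true]) = cyl σ := by
  ext ω
  simp only [Set.mem_union, mem_cyl_concat]
  cases h : ω σ.length <;> simp [h]

lemma cyl_disj (σ : List Bool) : Disjoint (cyl (σ ++ [false])) (cyl (σ ++ [true])) := by
  rw [Set.disjoint_left]
  intro ω h1 h2
  rw [mem_cyl_concat] at h1 h2
  simp [h1.2] at h2

lemma meas_cyl_split (ρ : Measure Cantor) (σ : List Bool) :
    ρ (cyl (σ ++ [false])) + ρ (cyl (σ ++ [true])) = ρ (cyl σ) := by
  rw [← cyl_split σ, measure_union (cyl_disj σ) (measurableSet_cyl _)]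

lemma exists_sol {p c : ℝ} (hp0 : 0 < p) (hp1 : p < 1) (hc : Real.sqrt (1/2) < c)
    (hc1 : c ≤ 1) :
    ∃ x, 0 < x ∧ x < 1 ∧ Real.sqrt (x * p) + Real.sqrt ((1 - x) * (1 - p)) = c := by
  set g : ℝ → ℝ := fun x => Real.sqrt (x * p) + Real.sqrt ((1 - x) * (1 - p)) with hg
  have hcont : Continuous g := by
    apply Continuous.add
    · exact (continuous_id.mul continuous_const).sqrt
    · exact ((continuous_const.sub continuous_id).mul continuous_const).sqrt
  have hgp : g p = 1 := by
    simp only [hg]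
    rw [Real.sqrt_mul_self hp0.le, Real.sqrt_mul_self (by linarith)]
    ring
  rcases le_total p (1 - p) with hle | hle
  · -- p ≤ 1/2, g 1 = √p ≤ √(1/2) < c
    have hg1 : g 1 = Real.sqrt p := by simp [hg]
    have h1 : g 1 < c := by
      rw [hg1]
      calc Real.sqrt p ≤ Real.sqrt (1/2) := Real.sqrt_le_sqrt (by linarith)
        _ < c := hc
    have := intermediate_value_Icc' (by linarith : p ≤ (1:ℝ)) hcont.continuousOn
    have hcmem : c ∈ Set.Icc (g 1) (g p) := ⟨h1.le, by rw [hgp]; exact hc1⟩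
    obtain ⟨x, hx, hgx⟩ := this hcmem
    refine ⟨x, by linarith [hx.1], ?_, hgx⟩
    rcases lt_or_eq_of_le hx.2 with h | h
    · exact h
    · exfalso; rw [h] at hgx; rw [hgx] at h1; exact lt_irrefl c h1
  · -- 1-p ≤ p, g 0 = √(1-p) < c
    have hg0 : g 0 = Real.sqrt (1 - p) := by simp [hg]
    have h0 : g 0 < c := by
      rw [hg0]
      calc Real.sqrt (1 - p) ≤ Real.sqrt (1/2) := Real.sqrt_le_sqrt (by linarith)
        _ < c := hc
    have := intermediate_value_Icc (hp0.le) hcont.continuousOn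
    have hcmem : c ∈ Set.Icc (g 0) (g p) := ⟨h0.le, by rw [hgp]; exact hc1⟩
    obtain ⟨x, hx, hgx⟩ := this hcmem
    refine ⟨x, ?_, by linarith [hx.2], hgx⟩
    rcases lt_or_eq_of_le hx.1 with h | h
    · exact h
    · exfalso; rw [← h] at hgx; rw [hgx] at h0; exact lt_irrefl c h0

noncomputable section
namespace S14

variable (f : List Bool → ℝ)

def step (s : List Bool × ℝ × ℝ) (b : Bool) : List Bool × ℝ × ℝ :=
  (s.1 ++ [b],
    if b then s.2.1 + f s.1 * (s.2.2 - s.2.1) else s.2.1,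
    if b then s.2.2 else s.2.1 + f s.1 * (s.2.2 - s.2.1))

def iv (σ : List Bool) : List Bool × ℝ × ℝ := σ.foldl (step f) ([], 0, 1)

def lo (σ : List Bool) : ℝ := (iv f σ).2.1
def hi (σ : List Bool) : ℝ := (iv f σ).2.2
def mid (σ : List Bool) : ℝ := lo f σ + f σ * (hi f σ - lo f σ)

lemma iv_append (σ : List Bool) (b : Bool) : iv f (σ ++ [b]) = step f (iv f σ) b :=
  List.foldl_append

lemma iv_fst (σ : List Bool) : (iv f σ).1 = σ := by
  induction σ using List.reverseRecOn with
  | nil => rfl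
  | append_singleton σ b ih => rw [iv_append]; simp [step, ih]

lemma lo_nil : lo f [] = 0 := rfl
lemma hi_nil : hi f [] = 1 := rfl

lemma lo_false (σ : List Bool) : lo f (σ ++ [false]) = lo f σ := by
  simp [lo, iv_append, step, iv_fst]
lemma hi_false (σ : List Bool) : hi f (σ ++ [false]) = mid f σ := by
  simp [hi, mid, lo, iv_append, step, iv_fst]
lemma lo_true (σ : List Bool) : lo f (σ ++ [true]) = mid f σ := by
  simp [lo, mid, hi, iv_append, step, iv_fst]
lemma hi_true (σ : List Bool) : hi f (σ ++ [true]) = hi f σ := by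
  simp [hi, iv_append, step, iv_fst]

lemma lo_lt_hi (hf : ∀ σ, 0 < f σ ∧ f σ < 1) (σ : List Bool) : lo f σ < hi f σ := by
  induction σ using List.reverseRecOn with
  | nil => norm_num [lo_nil, hi_nil]
  | append_singleton σ b ih =>
    obtain ⟨h0, h1⟩ := hf σ
    cases b
    · rw [lo_false, hi_false]; unfold mid; nlinarith
    · rw [lo_true, hi_true]; unfold mid; nlinarith

lemma lo_lt_mid (hf : ∀ σ, 0 < f σ ∧ f σ < 1) (σ : List Bool) : lo f σ < mid f σ := by
  have := lo_lt_hi f hf σ; have := (hf σ).1; unfold mid; nlinarith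

lemma mid_lt_hi (hf : ∀ σ, 0 < f σ ∧ f σ < 1) (σ : List Bool) : mid f σ < hi f σ := by
  have := lo_lt_hi f hf σ; have h1 := (hf σ).2; have h0 := (hf σ).1; unfold mid; nlinarith


def seg (t : ℝ) : ℕ → List Bool
  | 0 => []
  | n+1 => seg t n ++ [decide (mid f (seg t n) ≤ t)]

def T (t : ℝ) (n : ℕ) : Bool := decide (mid f (seg f t n) ≤ t)

lemma seg_succ (t : ℝ) (n : ℕ) : seg f t (n+1) = seg f t n ++ [T f t n] := rfl

lemma pre_T (t : ℝ) (n : ℕ) : pre (T f t) n = seg f t n := by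
  induction n with
  | zero => rfl
  | succ n ih => rw [pre_succ, seg_succ, ih]

lemma seg_length (t : ℝ) (n : ℕ) : (seg f t n).length = n := by
  induction n with
  | zero => rfl
  | succ n ih => rw [seg_succ]; simp [ih]

lemma seg_eq_iff (hf : ∀ σ, 0 < f σ ∧ f σ < 1) (σ : List Bool) (t : ℝ) (ht0 : 0 ≤ t) (ht1 : t < 1) :
    seg f t σ.length = σ ↔ lo f σ ≤ t ∧ t < hi f σ := by
  induction σ using List.reverseRecOn with
  | nil => simpa [seg, lo_nil, hi_nil] using ⟨ht0, ht1⟩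
  | append_singleton σ b ih =>
    have hlen : (σ ++ [b]).length = σ.length + 1 := by simp
    rw [hlen, seg_succ]
    constructor
    · intro h
      obtain ⟨h1, h2⟩ := List.concat_inj.mp (by simpa using h)
      obtain ⟨h3, h4⟩ := ih.mp h1
      unfold T at h2; rw [h1] at h2
      cases b
      · rw [lo_false, hi_false]
        simp only [decide_eq_false_iff_not, not_le] at h2
        exact ⟨h3, h2⟩
      · rw [lo_true, hi_true]
        simp only [decide_eq_true_eq] at h2
        exact ⟨h2, h4⟩
    · intro ⟨h1, h2⟩
      have hsub : lo f σ ≤ t ∧ t < hi f σ := by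
        cases b
        · rw [lo_false] at h1; rw [hi_false] at h2
          exact ⟨h1, lt_trans h2 (mid_lt_hi f hf σ)⟩
        · rw [lo_true] at h1; rw [hi_true] at h2
          exact ⟨le_trans (lo_lt_mid f hf σ).le h1, h2⟩
      have hseg := ih.mpr hsub
      rw [hseg]
      congr 1
      unfold T; rw [hseg]
      cases b
      · rw [lo_false] at h1; rw [hi_false] at h2
        simp [not_le.mpr h2]
      · rw [lo_true] at h1
        simp [h1]

lemma lo_nonneg (hf : ∀ σ, 0 < f σ ∧ f σ < 1) (σ : List Bool) : 0 ≤ lo f σ := by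
  induction σ using List.reverseRecOn with
  | nil => norm_num [lo_nil]
  | append_singleton σ b ih =>
    cases b
    · rw [lo_false]; exact ih
    · rw [lo_true]; exact le_trans ih (lo_lt_mid f hf σ).le

lemma hi_le_one (hf : ∀ σ, 0 < f σ ∧ f σ < 1) (σ : List Bool) : hi f σ ≤ 1 := by
  induction σ using List.reverseRecOn with
  | nil => norm_num [hi_nil]
  | append_singleton σ b ih =>
    cases b
    · rw [hi_false]; exact le_trans (mid_lt_hi f hf σ).le ih
    · rw [hi_true]; exact ih

lemma measurableSet_seg (n : ℕ) (σ : List Bool) : MeasurableSet {t : ℝ | seg f t n = σ} := by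
  induction n generalizing σ with
  | zero =>
    rcases eq_or_ne σ [] with h | h
    · subst h
      have : {t : ℝ | seg f t 0 = []} = Set.univ := by ext t; simp [seg]
      rw [this]; exact MeasurableSet.univ
    · have : {t : ℝ | seg f t 0 = σ} = ∅ := by ext t; simp [seg, h.symm]
      rw [this]; exact MeasurableSet.empty
  | succ n ih =>
    rcases List.eq_nil_or_concat σ with h | ⟨τ, b, h⟩
    · subst h
      convert MeasurableSet.empty
      ext t; simp only [Set.mem_setOf_eq, seg_succ, Set.mem_empty_iff_false, iff_false]
      intro hc; exact absurd (congrArg List.length hc) (by simp [seg_length])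
    · rw [List.concat_eq_append] at h
      subst h
      have : {t : ℝ | seg f t (n+1) = τ ++ [b]} =
          {t : ℝ | seg f t n = τ} ∩ {t : ℝ | decide (mid f τ ≤ t) = b} := by
        ext t
        simp only [Set.mem_setOf_eq, Set.mem_inter_iff, seg_succ]
        constructor
        · intro h
          obtain ⟨h1, h2⟩ := List.concat_inj.mp (by simpa using h)
          refine ⟨h1, ?_⟩
          unfold T at h2; rw [h1] at h2; exact h2
        · rintro ⟨h1, h2⟩
          rw [h1]; unfold T; rw [h1, h2]
      rw [this]
      apply (ih τ).inter
      cases b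
      · have : {t : ℝ | decide (mid f τ ≤ t) = false} = Set.Iio (mid f τ) := by
          ext t; simp
        rw [this]; exact measurableSet_Iio
      · have : {t : ℝ | decide (mid f τ ≤ t) = true} = Set.Ici (mid f τ) := by
          ext t; simp
        rw [this]; exact measurableSet_Ici

lemma measurable_T : Measurable (T f) := by
  apply measurable_pi_lambda
  intro n
  apply measurable_to_countable
  intro t
  have key : MeasurableSet {s : ℝ | T f s n = true} := by
    have : {s : ℝ | T f s n = true} = ⋃ σ : List Bool, ({s : ℝ | seg f s n = σ} ∩ Set.Ici (mid f σ)) := by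
      ext s
      simp only [Set.mem_setOf_eq, Set.mem_iUnion, Set.mem_inter_iff, Set.mem_Ici]
      constructor
      · intro h; exact ⟨seg f s n, rfl, by unfold T at h; simpa using h⟩
      · rintro ⟨σ, h1, h2⟩; unfold T; rw [h1]; simpa using h2
    rw [this]
    exact MeasurableSet.iUnion fun σ => (measurableSet_seg f n σ).inter measurableSet_Ici
  cases h : T f t n
  · have h2 : (fun s => T f s n) ⁻¹' {false} = {s : ℝ | T f s n = true}ᶜ := by
      ext s; cases hh : T f s n <;> simp [hh]
    rw [h2]; exact key.compl
  · have h2 : (fun s => T f s n) ⁻¹' {true} = {s : ℝ | T f s n = true} := by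
      ext s; simp
    rw [h2]; exact key

def myMeas : Measure Cantor := Measure.map (T f) (volume.restrict (Set.Ico (0:ℝ) 1))

lemma myMeas_cyl (hf : ∀ σ, 0 < f σ ∧ f σ < 1) (σ : List Bool) :
    myMeas f (cyl σ) = ENNReal.ofReal (hi f σ - lo f σ) := by
  rw [myMeas, Measure.map_apply (measurable_T f) (measurableSet_cyl σ),
    Measure.restrict_apply' measurableSet_Ico]
  have hset : T f ⁻¹' cyl σ ∩ Set.Ico (0:ℝ) 1 = Set.Ico (lo f σ) (hi f σ) := by
    ext t
    simp only [Set.mem_inter_iff, Set.mem_preimage, Set.mem_Ico]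
    constructor
    · rintro ⟨h1, h2, h3⟩
      rw [mem_cyl_iff, pre_T] at h1
      exact (seg_eq_iff f hf σ t h2 h3).mp h1
    · intro ⟨h1, h2⟩
      have ht0 : (0:ℝ) ≤ t := le_trans (lo_nonneg f hf σ) h1
      have ht1 : t < 1 := lt_of_lt_of_le h2 (hi_le_one f hf σ)
      refine ⟨?_, ht0, ht1⟩
      rw [mem_cyl_iff, pre_T]
      exact (seg_eq_iff f hf σ t ht0 ht1).mpr ⟨h1, h2⟩
  rw [hset, Real.volume_Ico]

lemma myMeas_prob : IsProbabilityMeasure (myMeas f) := by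
  constructor
  rw [myMeas, Measure.map_apply (measurable_T f) MeasurableSet.univ]
  simp [Real.volume_Ico]

lemma myMeas_full (hf : ∀ σ, 0 < f σ ∧ f σ < 1) : FullSupport (myMeas f) := by
  intro σ
  rw [myMeas_cyl f hf σ]
  simp only [ENNReal.ofReal_pos]
  linarith [lo_lt_hi f hf σ]

lemma cp_myMeas_false (hf : ∀ σ, 0 < f σ ∧ f σ < 1) (σ : List Bool) :
    cp (myMeas f) (σ ++ [false]) σ = f σ := by
  rw [cp, myMeas_cyl f hf, myMeas_cyl f hf, lo_false, hi_false]
  have h1 := lo_lt_hi f hf σ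
  have h2 := (hf σ).1
  rw [ENNReal.toReal_ofReal (by unfold mid; nlinarith), ENNReal.toReal_ofReal (by linarith)]
  have h3 : mid f σ - lo f σ = f σ * (hi f σ - lo f σ) := by unfold mid; ring
  rw [h3, mul_div_assoc, div_self (by linarith), mul_one]

lemma cp_myMeas_true (hf : ∀ σ, 0 < f σ ∧ f σ < 1) (σ : List Bool) :
    cp (myMeas f) (σ ++ [true]) σ = 1 - f σ := by
  rw [cp, myMeas_cyl f hf, myMeas_cyl f hf, lo_true, hi_true]
  have h1 := lo_lt_hi f hf σ
  have h2 := (hf σ).2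
  rw [ENNReal.toReal_ofReal (by unfold mid; nlinarith), ENNReal.toReal_ofReal (by linarith)]
  have h3 : hi f σ - mid f σ = (1 - f σ) * (hi f σ - lo f σ) := by unfold mid; ring
  rw [h3, mul_div_assoc, div_self (by linarith), mul_one]

end S14
end

lemma nu_facts (ν : Measure Cantor) [IsProbabilityMeasure ν] (hν : FullSupport ν)
    (σ : List Bool) :
    0 < cp ν (σ ++ [false]) σ ∧ cp ν (σ ++ [false]) σ < 1 ∧
      cp ν (σ ++ [true]) σ = 1 - cp ν (σ ++ [false]) σ := by
  have hfin : ∀ τ : List Bool, ν (cyl τ) ≠ ⊤ := fun τ => measure_ne_top ν _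
  have hsplit := meas_cyl_split ν σ
  have ha : 0 < (ν (cyl (σ ++ [false]))).toReal := ENNReal.toReal_pos (hν _).ne' (hfin _)
  have hb : 0 < (ν (cyl (σ ++ [true]))).toReal := ENNReal.toReal_pos (hν _).ne' (hfin _)
  have habc : (ν (cyl (σ ++ [false]))).toReal + (ν (cyl (σ ++ [true]))).toReal
      = (ν (cyl σ)).toReal := by
    rw [← ENNReal.toReal_add (hfin _) (hfin _), hsplit]
  set a := (ν (cyl (σ ++ [false]))).toReal
  set b := (ν (cyl (σ ++ [true]))).toReal
  set s := (ν (cyl σ)).toReal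
  have hs : 0 < s := by linarith
  refine ⟨div_pos ha hs, ?_, ?_⟩
  · rw [cp, div_lt_one hs]; linarith
  · rw [cp, cp]
    show b / s = 1 - a / s
    field_simp
    linarith


/-- Given an increasing non-negative dyadic function `A` with `A(∅)=0`, `A(σ0)=A(σ1)`, and
increments below `2(1−√(1/2))`, there is a full-support probability measure `μ` whose one-step
squared Hellinger distances to `ν` realize the increments of `A`; consequently
`sup_n A(ω↾n) = Σ_n H²_{F_{n+1}}(μ,ν)(ω)` for every `ω`. -/
theorem stmt14 (ν : Measure Cantor) [IsProbabilityMeasure ν] (hν : FullSupport ν)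
    (A : List Bool → ℝ) (hA0 : A [] = 0) (hnn : ∀ σ, 0 ≤ A σ) (hinc : IncrDy A)
    (hsame : ∀ σ : List Bool, A (σ ++ [false]) = A (σ ++ [true]))
    (hsmall : ∀ (σ : List Bool) (ι : Bool),
      A (σ ++ [ι]) - A σ < 2 * (1 - Real.sqrt (1 / 2))) :
    ∃ μ : Measure Cantor, IsProbabilityMeasure μ ∧ FullSupport μ ∧
      (∀ (σ : List Bool) (ι : Bool),
        A (σ ++ [ι]) - A σ =
          2 * (1 - ∑ j : Bool, Real.sqrt (cp μ (σ ++ [j]) σ * cp ν (σ ++ [j]) σ))) ∧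
      (∀ ω : Cantor,
        (⨆ n : ℕ, ENNReal.ofReal (A (pre ω n))) =
          ∑' n : ℕ, ENNReal.ofReal
            (2 * (1 - ∑ j : Bool,
              Real.sqrt (cp μ (pre ω n ++ [j]) (pre ω n) *
                cp ν (pre ω n ++ [j]) (pre ω n))))) := by
  classical
  have hPfacts := fun σ => nu_facts ν hν σ
  have hkey : ∀ σ : List Bool, ∃ x, 0 < x ∧ x < 1 ∧
      Real.sqrt (x * cp ν (σ ++ [false]) σ) +
        Real.sqrt ((1 - x) * (1 - cp ν (σ ++ [false]) σ)) =
          1 - (A (σ ++ [false]) - A σ) / 2 := by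
    intro σ
    apply exists_sol (hPfacts σ).1 (hPfacts σ).2.1
    · have := hsmall σ false; linarith
    · have : A σ ≤ A (σ ++ [false]) := hinc σ (σ ++ [false]) ⟨[false], rfl⟩
      linarith
  choose f hf0 hf1 hfc using hkey
  have hf : ∀ σ, 0 < f σ ∧ f σ < 1 := fun σ => ⟨hf0 σ, hf1 σ⟩
  have hmain : ∀ σ : List Bool,
      2 * (1 - ∑ j : Bool, Real.sqrt (cp (S14.myMeas f) (σ ++ [j]) σ * cp ν (σ ++ [j]) σ))
        = A (σ ++ [false]) - A σ := by
    intro σ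
    rw [Fintype.sum_bool, S14.cp_myMeas_true f hf, S14.cp_myMeas_false f hf,
      (hPfacts σ).2.2]
    have h := hfc σ
    have : Real.sqrt ((1 - f σ) * (1 - cp ν (σ ++ [false]) σ)) +
        Real.sqrt (f σ * cp ν (σ ++ [false]) σ) = 1 - (A (σ ++ [false]) - A σ) / 2 := by
      linarith
    rw [this]; ring
  refine ⟨S14.myMeas f, S14.myMeas_prob f, S14.myMeas_full f hf, ?_, ?_⟩
  · intro σ ι
    cases ι
    · rw [hmain σ]
    · rw [hmain σ, hsame σ]
  · intro ω
    have hterm : ∀ n : ℕ,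
        ENNReal.ofReal (2 * (1 - ∑ j : Bool,
            Real.sqrt (cp (S14.myMeas f) (pre ω n ++ [j]) (pre ω n) *
              cp ν (pre ω n ++ [j]) (pre ω n))))
          = ENNReal.ofReal (A (pre ω (n+1)) - A (pre ω n)) := by
      intro n
      rw [hmain (pre ω n), pre_succ]
      congr 1
      cases h : ω n
      · rfl
      · rw [hsame]
    rw [tsum_congr hterm, ENNReal.tsum_eq_iSup_nat]
    have hsum : ∀ n : ℕ, ∑ a ∈ Finset.range n,
        ENNReal.ofReal (A (pre ω (a+1)) - A (pre ω a)) = ENNReal.ofReal (A (pre ω n)) := by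
      intro n
      rw [← ENNReal.ofReal_sum_of_nonneg ?hnn]
      case hnn =>
        intro i _
        have hp : pre ω i <+: pre ω (i+1) := ⟨[ω i], (pre_succ ω i).symm⟩
        have := hinc _ _ hp
        linarith
      rw [Finset.sum_range_sub (fun i => A (pre ω i))]
      have h0 : A (pre ω 0) = 0 := hA0
      rw [h0, sub_zero]
    exact (iSup_congr hsum).symm
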